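/- arXiv:2506.10519 — 3 statements merged into one kernel-verified Lean document; each statement's English description precedes it below -/
import Mathlib

section
/- The map μ : T^*M → (𝔤_M → ℝ), sending a covector η_x ∈ T_x^*M to the function (X,f) ↦ η_x(X_x) + f(x), is injective and is a topological embedding of the cotangent bundle T^*M (with its canonical manifold/vector-bundle topology) into the space of all real-valued functions on 𝔤_M equipped with the topology of pointwise convergence (the product topology); this is the weak*-topology case of the statement that μ embeds T^*M into the dual of 𝔤_M. -/
/-!
STATEMENT 3: The map `μ : T^*M → (𝔤_M → ℝ)`, sending a covector `η_x ∈ T_x^*M` to the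
function `(X,f) ↦ η_x(X_x) + f(x)`, is injective and is a topological embedding of the
cotangent bundle `T^*M` (with its canonical vector-bundle topology) into the space of all
real-valued functions on `𝔤_M` with the topology of pointwise convergence (the product
topology); this is the weak*-topology case of the embedding of `T^*M` into `𝔤_M^*`.
-/

open Manifold Bundle Topology
set_option linter.unusedSectionVars false

variable (d : ℕ) (M : Type*) [TopologicalSpace M]
  [ChartedSpace (EuclideanSpace ℝ (Fin d)) M]
  [IsManifold (𝓡 d) (⊤ : ℕ∞) M]
  [SigmaCompactSpace M] [ConnectedSpace M] [T2Space M]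

/-- An element of `𝔤_M`: a smooth compactly supported vector field on `M` together with a
smooth compactly supported real-valued function on `M`. -/
structure GMLieElt where
  X : (x : M) → TangentSpace (𝓡 d) x
  f : M → ℝ
  hX : ContMDiff (𝓡 d) (𝓡 d).tangent (⊤ : ℕ∞)
    (fun x => (⟨x, X x⟩ : TangentBundle (𝓡 d) M))
  hXc : ∃ K : Set M, IsCompact K ∧ ∀ x ∉ K, X x = 0
  hf : ContMDiff (𝓡 d) 𝓘(ℝ, ℝ) (⊤ : ℕ∞) f
  hfc : HasCompactSupport f

/-- The cotangent bundle `T^*M`: the total space of the bundle of continuous linear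
functionals on the tangent spaces, with its canonical vector-bundle topology. -/
abbrev CotangentTotal : Type _ :=
  Bundle.TotalSpace (EuclideanSpace ℝ (Fin d) →L[ℝ] ℝ)
    (fun x : M => TangentSpace (𝓡 d) x →SL[RingHom.id ℝ]
      Bundle.Trivial M ℝ x)

/-- The moment map `μ : T^*M → (𝔤_M → ℝ)`, `μ(η_x)(X,f) = η_x(X_x) + f(x)`. -/
noncomputable def momentMap (p : CotangentTotal d M) : GMLieElt d M → ℝ :=
  fun v => p.snd (v.X p.proj) + v.f p.proj

/-! ### Auxiliary constructions -/

namespace MomentAux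

open Set Filter

variable {d M}

local notation "E" => EuclideanSpace ℝ (Fin d)

/-- The element of `𝔤_M` with zero vector field and a bump function. -/
noncomputable def funElt (c : M) (χ : SmoothBumpFunction (𝓡 d) c) : GMLieElt d M where
  X := fun _ => 0
  f := χ
  hX := Bundle.contMDiff_zeroSection ℝ (TangentSpace (𝓡 d) : M → Type _)
  hXc := ⟨∅, isCompact_empty, fun _ _ => rfl⟩
  hf := χ.contMDiff
  hfc := χ.hasCompactSupport

/-- The element of `𝔤_M` with zero function and a bump vector field. -/
noncomputable def vecElt (c : M) (χ : SmoothBumpFunction (𝓡 d) c) (w : E) : GMLieElt d M where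
  X := fun y => χ y • (trivializationAt E (TangentSpace (𝓡 d)) c).symm y w
  f := 0
  hX := by
    intro y
    set e := trivializationAt E (TangentSpace (𝓡 d)) c with he
    by_cases hy : y ∈ e.baseSet
    · rw [Bundle.contMDiffAt_section]
      set e' := trivializationAt E (TangentSpace (𝓡 d)) y with he'
      have hmem : y ∈ e.baseSet ∩ e'.baseSet :=
        ⟨hy, FiberBundle.mem_baseSet_trivializationAt' y⟩
      have hs : IsOpen (e.baseSet ∩ e'.baseSet) := e.open_baseSet.inter e'.open_baseSet
      have main : ContMDiffOn (𝓡 d) 𝓘(ℝ, E) (⊤ : ℕ∞)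
          (fun z => χ z • (e.coordChangeL ℝ e' z w)) (e.baseSet ∩ e'.baseSet) :=
        (χ.contMDiff.contMDiffOn).smul
          ((contMDiffOn_coordChangeL e e').clm_apply contMDiffOn_const)
      refine (main.contMDiffAt (hs.mem_nhds hmem)).congr_of_eventuallyEq ?_
      filter_upwards [hs.mem_nhds hmem] with z hz
      rw [Trivialization.coordChangeL_apply e e' hz,
        (e'.linear ℝ hz.2).map_smul (χ z) (e.symm z w)]
    · have hy' : y ∉ tsupport χ := by
        intro h
        apply hy
        rw [he, TangentBundle.trivializationAt_baseSet]
        exact χ.tsupport_subset_chartAt_source h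
      refine ((Bundle.contMDiff_zeroSection ℝ
        (TangentSpace (𝓡 d) : M → Type _)).contMDiffAt).congr_of_eventuallyEq ?_
      filter_upwards [(isClosed_tsupport χ).isOpen_compl.mem_nhds hy'] with z hz
      have : χ z = 0 := image_eq_zero_of_notMem_tsupport hz
      simp [this, Bundle.zeroSection]
  hXc := ⟨tsupport χ, χ.hasCompactSupport, fun y hy => by
    show χ y • _ = 0
    rw [image_eq_zero_of_notMem_tsupport hy, zero_smul]⟩
  hf := contMDiff_const
  hfc := by
    have : HasCompactSupport (fun _ : M => (0 : ℝ)) := by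
      rw [HasCompactSupport, tsupport]
      simp
    exact this

@[simp] lemma funElt_X (c : M) (χ : SmoothBumpFunction (𝓡 d) c) (y : M) :
    (funElt c χ).X y = 0 := rfl

@[simp] lemma funElt_f (c : M) (χ : SmoothBumpFunction (𝓡 d) c) :
    (funElt c χ).f = χ := rfl

@[simp] lemma vecElt_X (c : M) (χ : SmoothBumpFunction (𝓡 d) c) (w : E) (y : M) :
    (vecElt c χ w).X y = χ y • (trivializationAt E (TangentSpace (𝓡 d)) c).symm y w := rfl

@[simp] lemma vecElt_f (c : M) (χ : SmoothBumpFunction (𝓡 d) c) (w : E) :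
    (vecElt c χ w).f = 0 := rfl

lemma momentMap_funElt (p : CotangentTotal d M) (c : M) (χ : SmoothBumpFunction (𝓡 d) c) :
    momentMap d M p (funElt c χ) = χ p.proj := by
  simp [momentMap, funElt]

lemma momentMap_vecElt (p : CotangentTotal d M) (c : M) (χ : SmoothBumpFunction (𝓡 d) c)
    (w : E) :
    momentMap d M p (vecElt c χ w) =
      χ p.proj * p.snd ((trivializationAt E (TangentSpace (𝓡 d)) c).symm p.proj w) := by
  have : p.snd ((vecElt c χ w).X p.proj) =
      χ p.proj * p.snd ((trivializationAt E (TangentSpace (𝓡 d)) c).symm p.proj w) := by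
    rw [vecElt_X, map_smul]
    rfl
  simp [momentMap, this]

lemma momentMap_inj : Function.Injective (momentMap d M) := by
  rintro ⟨x, ξ⟩ ⟨y, ζ⟩ h
  obtain rfl : x = y := by
    by_contra hxy
    obtain ⟨χ, -, hχ⟩ := (SmoothBumpFunction.nhds_basis_tsupport (I := 𝓡 d) x).mem_iff.mp
      (isOpen_compl_singleton.mem_nhds (by simpa using hxy) : ({y}ᶜ : Set M) ∈ 𝓝 x)
    have h1 := congrFun h (funElt x χ)
    rw [momentMap_funElt, momentMap_funElt] at h1
    have hy0 : χ y = 0 := image_eq_zero_of_notMem_tsupport (fun hy => by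
      simpa using hχ hy)
    have hx1 : χ x = 1 := χ.eq_one
    simp only [TotalSpace.proj] at h1  -- proj of ⟨x, ξ⟩ is x
    rw [hx1, hy0] at h1
    exact one_ne_zero h1
  obtain rfl : ξ = ζ := by
    obtain ⟨χ⟩ : Nonempty (SmoothBumpFunction (𝓡 d) x) := inferInstance
    set e := trivializationAt E (TangentSpace (𝓡 d)) x with he
    have hx : x ∈ e.baseSet := FiberBundle.mem_baseSet_trivializationAt' x
    apply ContinuousLinearMap.ext
    intro v
    have h1 := congrFun h (vecElt x χ (e ⟨x, v⟩).2)
    rw [momentMap_vecElt, momentMap_vecElt] at h1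
    simp only [TotalSpace.proj] at h1
    rw [χ.eq_one, one_mul, one_mul, e.symm_apply_apply_mk hx] at h1
    exact h1
  rfl


lemma momentMap_continuous : Continuous (momentMap d M) := by
  apply continuous_pi
  intro v
  refine Continuous.add ?_ (v.hf.continuous.comp (FiberBundle.continuous_proj _ _))
  rw [continuous_iff_continuousAt]
  intro p₀
  set x₀ := p₀.proj with hx₀
  set e₁ := trivializationAt E (TangentSpace (𝓡 d)) x₀ with he₁
  set eH := trivializationAt (E →L[ℝ] ℝ)
    (fun x : M => TangentSpace (𝓡 d) x →SL[RingHom.id ℝ]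
      Bundle.Trivial M ℝ x) x₀ with heH
  have hp₀ : p₀ ∈ eH.source := by
    rw [Trivialization.mem_source]
    exact FiberBundle.mem_baseSet_trivializationAt' x₀
  have hbase : ∀ p : CotangentTotal d M, p ∈ eH.source → p.proj ∈ e₁.baseSet := by
    intro p hp
    rw [heH, hom_trivializationAt_source] at hp
    exact hp.1
  have hsec : ContinuousOn (fun y : M => (e₁ ⟨y, v.X y⟩).2) e₁.baseSet := by
    have hXc : Continuous (fun y : M =>
        (⟨y, v.X y⟩ : TotalSpace E (TangentSpace (𝓡 d)))) := v.hX.continuous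
    exact continuous_snd.comp_continuousOn
      (e₁.continuousOn.comp hXc.continuousOn (fun y hy => e₁.mem_source.mpr hy))
  have hmain : ContinuousOn (fun p : CotangentTotal d M =>
      ((eH p).2 : E →L[ℝ] ℝ) ((e₁ ⟨p.proj, v.X p.proj⟩).2)) eH.source := by
    apply ContinuousOn.clm_apply
    · exact continuous_snd.comp_continuousOn eH.continuousOn
    · exact hsec.comp (FiberBundle.continuous_proj _ _).continuousOn hbase
  have heq : ∀ p ∈ eH.source,
      ((eH p).2 : E →L[ℝ] ℝ) ((e₁ ⟨p.proj, v.X p.proj⟩).2) = p.snd (v.X p.proj) := by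
    intro p hp
    have hpb : p.proj ∈ e₁.baseSet := hbase p hp
    rw [heH, hom_trivializationAt_apply]
    show ((trivializationAt ℝ (Bundle.Trivial M ℝ) x₀).continuousLinearMapAt ℝ p.proj)
      (p.snd (e₁.symmL ℝ p.proj ((e₁ ⟨p.proj, v.X p.proj⟩).2))) = p.snd (v.X p.proj)
    rw [Trivialization.symmL_apply _ hpb, e₁.symm_apply_apply_mk hpb,
      Trivialization.continuousLinearMapAt_apply,
      Trivialization.coe_linearMapAt_of_mem _ (Set.mem_univ _)]
    rfl
  have : ContinuousOn (fun p : CotangentTotal d M => p.snd (v.X p.proj)) eH.source :=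
    hmain.congr (fun p hp => (heq p hp).symm)
  exact this.continuousAt (eH.open_source.mem_nhds hp₀)

lemma comap_le_nhds (p₀ : CotangentTotal d M) :
    Filter.comap (momentMap d M) (𝓝 (momentMap d M p₀)) ≤ 𝓝 p₀ := by
  classical
  set μ := momentMap d M with hμ
  set x₀ := p₀.proj with hx₀
  obtain ⟨χ⟩ : Nonempty (SmoothBumpFunction (𝓡 d) x₀) := inferInstance
  set e₁ := trivializationAt E (TangentSpace (𝓡 d)) x₀ with he₁
  set eH := trivializationAt (E →L[ℝ] ℝ)
    (fun x : M => TangentSpace (𝓡 d) x →SL[RingHom.id ℝ]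
      Bundle.Trivial M ℝ x) x₀ with heH
  -- the compact set in the base
  set K := χ ⁻¹' Ici (2⁻¹ : ℝ) with hK
  have hKsub : K ⊆ tsupport χ := by
    intro y hy
    apply subset_tsupport
    have : (2⁻¹ : ℝ) ≤ χ y := hy
    intro h0
    rw [h0] at this
    norm_num at this
  have hKc : IsCompact K :=
    χ.hasCompactSupport.of_isClosed_subset (isClosed_Ici.preimage χ.continuous) hKsub
  have hKb : K ⊆ e₁.baseSet := by
    rw [he₁, TangentBundle.trivializationAt_baseSet]
    exact fun y hy => χ.tsupport_subset_chartAt_source (hKsub hy)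
  -- test elements
  set b : Fin d → E := fun j => EuclideanSpace.single j 1 with hb
  set V : Fin d → GMLieElt d M := fun j => vecElt x₀ χ (b j) with hV
  set c : Fin d → ℝ := fun j => μ p₀ (V j) with hc
  set S : ℝ := ∑ j, 2 * (|c j| + 1) with hS
  have hSnn : 0 ≤ S := Finset.sum_nonneg fun j _ => by positivity
  -- the neighborhood W of μ p₀
  set W := ((fun g : GMLieElt d M → ℝ => g (funElt x₀ χ)) ⁻¹' Ioi (2⁻¹ : ℝ)) ∩
      ⋂ j, (fun g : GMLieElt d M → ℝ => g (V j)) ⁻¹' Metric.ball (c j) 1 with hW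
  have hWopen : IsOpen W :=
    (isOpen_Ioi.preimage (continuous_apply _)).inter
      (isOpen_iInter_of_finite fun j => Metric.isOpen_ball.preimage (continuous_apply (V j)))
  have hWmem : μ p₀ ∈ W := by
    constructor
    · show μ p₀ (funElt x₀ χ) ∈ Ioi (2⁻¹ : ℝ)
      rw [hμ, momentMap_funElt, ← hx₀, χ.eq_one]
      norm_num
    · refine Set.mem_iInter.mpr fun j => ?_
      show μ p₀ (V j) ∈ Metric.ball (c j) 1
      simp [hc]
  -- the compact set C in the cotangent bundle
  set C := eH.toPartialHomeomorph.symm '' (K ×ˢ Metric.closedBall (0 : E →L[ℝ] ℝ) S) with hC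
  have hCc : IsCompact C := by
    refine (hKc.prod (isCompact_closedBall _ _)).image_of_continuousOn
      (eH.toPartialHomeomorph.continuousOn_symm.mono ?_)
    rw [heH, hom_trivializationAt_target]
    exact Set.prod_mono (fun y hy => ⟨hKb hy, Set.mem_univ y⟩) (Set.subset_univ _)
  -- μ ⁻¹' W ⊆ C
  have hsub : μ ⁻¹' W ⊆ C := by
    intro p hp
    obtain ⟨hp1, hp2⟩ := hp
    have hy : p.proj ∈ K := by
      have : μ p (funElt x₀ χ) ∈ Ioi (2⁻¹ : ℝ) := hp1
      rw [hμ, momentMap_funElt] at this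
      exact le_of_lt (Set.mem_Ioi.mp this)
    have hpb : p.proj ∈ e₁.baseSet := hKb hy
    have hpsrc : p ∈ eH.source := by
      rw [heH, hom_trivializationAt_source]
      exact ⟨hpb, Set.mem_univ _⟩
    have hχhalf : (2⁻¹ : ℝ) ≤ χ p.proj := hy
    set L : E →L[ℝ] ℝ := (eH p).2 with hL
    have hLapp : ∀ w : E, L w = p.snd (e₁.symm p.proj w) := by
      intro w
      rw [hL, heH, hom_trivializationAt_apply]
      show ((trivializationAt ℝ (Bundle.Trivial M ℝ) x₀).continuousLinearMapAt ℝ p.proj)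
        (p.snd (e₁.symmL ℝ p.proj w)) = p.snd (e₁.symm p.proj w)
      rw [Trivialization.symmL_apply _ hpb, Trivialization.continuousLinearMapAt_apply,
        Trivialization.coe_linearMapAt_of_mem _ (Set.mem_univ _)]
      rfl
    have hLj : ∀ j, |L (b j)| ≤ 2 * (|c j| + 1) := by
      intro j
      have h2 : |μ p (V j) - c j| < 1 := by
        have := Set.mem_iInter.mp hp2 j
        simpa [Real.dist_eq] using this
      have h3 : μ p (V j) = χ p.proj * L (b j) := by
        rw [hμ, hV, momentMap_vecElt, hLapp]
      have h4 : |χ p.proj * L (b j)| ≤ |c j| + 1 := by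
        rw [← h3]
        have := abs_sub_abs_le_abs_sub (μ p (V j)) (c j)
        linarith
      rw [abs_mul, abs_of_nonneg χ.nonneg] at h4
      nlinarith [abs_nonneg (L (b j)), χ.nonneg (x := p.proj)]
    have hLnorm : ‖L‖ ≤ S := by
      refine L.opNorm_le_bound hSnn fun x => ?_
      have hx : ∑ j, x j • b j = x := by
        have := (EuclideanSpace.basisFun (Fin d) ℝ).sum_repr x
        simpa [EuclideanSpace.basisFun_repr, hb, EuclideanSpace.basisFun_apply] using this
      have hcoord : ∀ j, |x j| ≤ ‖x‖ := by
        intro j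
        have h5 := abs_real_inner_le_norm (EuclideanSpace.single j (1 : ℝ)) x
        rw [EuclideanSpace.inner_single_left, EuclideanSpace.norm_single] at h5
        simpa using h5
      calc ‖L x‖ = ‖∑ j, x j • L (b j)‖ := by
            rw [← hx]
            rw [map_sum]
            simp only [map_smul]
            rw [hx]
          _ ≤ ∑ j, ‖x j • L (b j)‖ := norm_sum_le _ _
          _ ≤ ∑ j, (2 * (|c j| + 1)) * ‖x‖ := by
            refine Finset.sum_le_sum fun j _ => ?_
            rw [norm_smul]
            calc ‖x j‖ * ‖L (b j)‖ ≤ ‖x‖ * (2 * (|c j| + 1)) := by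
                  refine mul_le_mul (hcoord j) ?_ (norm_nonneg _) (norm_nonneg _)
                  simpa [Real.norm_eq_abs] using hLj j
              _ = (2 * (|c j| + 1)) * ‖x‖ := mul_comm _ _
          _ = S * ‖x‖ := by rw [hS, Finset.sum_mul]
    refine ⟨eH p, ⟨?_, ?_⟩, eH.toPartialHomeomorph.left_inv hpsrc⟩
    · show (eH p).1 ∈ K
      rw [eH.coe_fst hpsrc]
      exact hy
    · exact mem_closedBall_zero_iff.mpr hLnorm
  -- filter argument
  have hCmem : C ∈ Filter.comap μ (𝓝 (μ p₀)) :=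
    Filter.mem_comap.mpr ⟨W, hWopen.mem_nhds hWmem, hsub⟩
  refine Filter.le_iff_ultrafilter.mpr fun u hu => ?_
  have huC : ↑u ≤ Filter.principal C := Filter.le_principal_iff.mpr (hu hCmem)
  obtain ⟨q, _, hq⟩ := hCc.ultrafilter_le_nhds u huC
  have h1 : Filter.Tendsto μ u (𝓝 (μ q)) := (momentMap_continuous.tendsto q).mono_left hq
  have h2 : Filter.Tendsto μ u (𝓝 (μ p₀)) :=
    le_trans (Filter.map_mono hu) (Filter.map_comap_le)
  have hqp : q = p₀ := momentMap_inj (tendsto_nhds_unique h1 h2)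
  exact hqp ▸ hq

end MomentAux

/-- **The moment map is a topological embedding of `T^*M` into `𝔤_M^*` with the
weak*-topology** : `μ` is injective, and it is a topological embedding of `T^*M` into the
space of real-valued functions on `𝔤_M` with the topology of pointwise convergence. -/
theorem momentMap_injective_isEmbedding :
    Function.Injective (momentMap d M) ∧ Topology.IsEmbedding (momentMap d M) := by
  refine ⟨MomentAux.momentMap_inj, ?_⟩
  refine ⟨Topology.isInducing_iff_nhds.mpr fun p₀ =>
    le_antisymm ?_ (MomentAux.comap_le_nhds p₀), MomentAux.momentMap_inj⟩
  exact Filter.tendsto_iff_comap.mp (MomentAux.momentMap_continuous.tendsto p₀)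
end

section
/- Define, for (φ,f) ∈ 𝒢_M and (X,g) ∈ 𝔤_M, Ad_{(φ,f)}(X,g) := (φ_*X, g∘φ⁻¹ + (X(f∘φ))∘φ⁻¹), where (φ_*X)_y := T_{φ⁻¹(y)}φ (X_{φ⁻¹(y)}) is the pushforward vector field. Then: (i) Ad_{(id_M,0)} is the identity and Ad_{(φ,f)(θ,g)} = Ad_{(φ,f)} ∘ Ad_{(θ,g)} for all (φ,f),(θ,g) ∈ 𝒢_M, so Ad is a left action of 𝒢_M on 𝔤_M; and (ii) each Ad_{(φ,f)} is a Lie algebra automorphism of 𝔤_M: Ad_{(φ,f)}[(X,g₁),(Y,g₂)] = [Ad_{(φ,f)}(X,g₁), Ad_{(φ,f)}(Y,g₂)] for all (X,g₁),(Y,g₂) ∈ 𝔤_M. -/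
/-!
STATEMENT 10: The adjoint action of `𝒢_M` on `𝔤_M`,
`Ad_{(φ,f)}(X,g) := (φ_*X, g∘φ⁻¹ + (X(f∘φ))∘φ⁻¹)`, is a left action of `𝒢_M` on `𝔤_M`
(`Ad_{(id,0)} = id` and `Ad_{(φ,f)(θ,g)} = Ad_{(φ,f)} ∘ Ad_{(θ,g)}`), and each
`Ad_{(φ,f)}` is a Lie algebra automorphism of `𝔤_M` for the bracket
`[(X,f),(Y,g)] = (−⁅X,Y⁆, −Xg+Yf)`.

Smooth vector fields are formalized as derivations of the algebra of smooth functions;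
the pushforward `φ_*X` acts on a smooth function `g` by `(φ_*X)g = (X(g∘φ))∘φ⁻¹`.
-/

open Manifold Topology ContDiff

variable (d : ℕ) (M : Type*) [TopologicalSpace M]
  [ChartedSpace (EuclideanSpace ℝ (Fin d)) M]
  [IsManifold (𝓡 d) ((⊤ : ℕ∞) : WithTop ℕ∞) M]
  [SigmaCompactSpace M] [ConnectedSpace M] [T2Space M]

/-- Smooth vector fields on `M`, as derivations of the algebra of smooth functions. -/
abbrev SmoothVF : Type _ :=
  Derivation ℝ C^(⊤ : ℕ∞)⟮𝓡 d, M; ℝ⟯ C^(⊤ : ℕ∞)⟮𝓡 d, M; ℝ⟯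

variable {d M}

/-- A vector field has compact support if it vanishes outside a compact set. -/
def VFCompactSupport (X : SmoothVF d M) : Prop :=
  ∃ K : Set M, IsCompact K ∧ ∀ x ∉ K, Derivation.evalAt x X = 0

/-- The underlying vector space of `𝔤_M`. -/
abbrev GMAlg (d : ℕ) (M : Type*) [TopologicalSpace M]
    [ChartedSpace (EuclideanSpace ℝ (Fin d)) M]
    [IsManifold (𝓡 d) ((⊤ : ℕ∞) : WithTop ℕ∞) M] : Type _ :=
  SmoothVF d M × C^(⊤ : ℕ∞)⟮𝓡 d, M; ℝ⟯

/-- The bracket `[(X,f),(Y,g)] := (−⁅X,Y⁆, −Xg + Yf)` of `𝔤_M`. -/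
noncomputable def gmBracket (p q : GMAlg d M) : GMAlg d M :=
  (-⁅p.1, q.1⁆, -(p.1 q.2) + q.1 p.2)

/-- A diffeomorphism of `M` as a smooth map. -/
noncomputable def toSmoothMap (φ : M ≃ₘ⟮𝓡 d, 𝓡 d⟯ M) : C^(⊤ : ℕ∞)⟮𝓡 d, M; 𝓡 d, M⟯ :=
  ⟨⇑φ, φ.contMDiff⟩

/-- Precomposition with a diffeomorphism, as a linear map on smooth functions. -/
noncomputable def compByDiffeo (φ : M ≃ₘ⟮𝓡 d, 𝓡 d⟯ M) :
    C^(⊤ : ℕ∞)⟮𝓡 d, M; ℝ⟯ →ₗ[ℝ] C^(⊤ : ℕ∞)⟮𝓡 d, M; ℝ⟯ where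
  toFun g := g.comp (toSmoothMap φ)
  map_add' g₁ g₂ := by ext y; rfl
  map_smul' c g := by ext y; rfl

/-- The pushforward vector field `φ_*X`: as a derivation, `(φ_*X)g := (X(g∘φ))∘φ⁻¹`. -/
noncomputable def pushVF (φ : M ≃ₘ⟮𝓡 d, 𝓡 d⟯ M) (X : SmoothVF d M) : SmoothVF d M where
  toLinearMap := (compByDiffeo φ.symm) ∘ₗ (X.toLinearMap ∘ₗ compByDiffeo φ)
  map_one_eq_zero' := by
    ext y
    show (X ((1 : C^(⊤ : ℕ∞)⟮𝓡 d, M; ℝ⟯).comp (toSmoothMap φ))) (φ.symm y) = _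
    rw [show ((1 : C^(⊤ : ℕ∞)⟮𝓡 d, M; ℝ⟯).comp (toSmoothMap φ)) = 1 from rfl,
      Derivation.map_one_eq_zero]
    rfl
  leibniz' := by
    intro a b
    ext y
    show (X ((a * b).comp (toSmoothMap φ))) (φ.symm y) = _
    have h1 : (a * b).comp (toSmoothMap φ)
        = a.comp (toSmoothMap φ) * b.comp (toSmoothMap φ) := rfl
    rw [h1, Derivation.leibniz]
    show a (φ (φ.symm y)) * (X (b.comp (toSmoothMap φ))) (φ.symm y)
        + b (φ (φ.symm y)) * (X (a.comp (toSmoothMap φ))) (φ.symm y) = _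
    rw [φ.apply_symm_apply]
    rfl

/-- The adjoint action `Ad_{(φ,f)}(X,g) := (φ_*X, g∘φ⁻¹ + (X(f∘φ))∘φ⁻¹)` of `𝒢_M`
on `𝔤_M`. -/
noncomputable def AdG (φ : M ≃ₘ⟮𝓡 d, 𝓡 d⟯ M) (f : C^(⊤ : ℕ∞)⟮𝓡 d, M; ℝ⟯) (p : GMAlg d M) :
    GMAlg d M :=
  (pushVF φ p.1,
    p.2.comp (toSmoothMap φ.symm)
      + (p.1 (f.comp (toSmoothMap φ))).comp (toSmoothMap φ.symm))


section Aux

omit [SigmaCompactSpace M] [ConnectedSpace M] [T2Space M] in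
lemma comp_symm_comp (φ : M ≃ₘ⟮𝓡 d, 𝓡 d⟯ M) (h : C^(⊤ : ℕ∞)⟮𝓡 d, M; ℝ⟯) :
    (h.comp (toSmoothMap φ.symm)).comp (toSmoothMap φ) = h := by
  ext x; exact congrArg h (φ.symm_apply_apply x)

omit [SigmaCompactSpace M] [ConnectedSpace M] [T2Space M] in
lemma pushVF_apply (φ : M ≃ₘ⟮𝓡 d, 𝓡 d⟯ M) (X : SmoothVF d M) (h : C^(⊤ : ℕ∞)⟮𝓡 d, M; ℝ⟯) :
    pushVF φ X h = (X (h.comp (toSmoothMap φ))).comp (toSmoothMap φ.symm) := rfl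

omit [SigmaCompactSpace M] [ConnectedSpace M] [T2Space M] in
lemma pushVF_comp_symm (φ : M ≃ₘ⟮𝓡 d, 𝓡 d⟯ M) (X : SmoothVF d M) (h : C^(⊤ : ℕ∞)⟮𝓡 d, M; ℝ⟯) :
    pushVF φ X (h.comp (toSmoothMap φ.symm)) = (X h).comp (toSmoothMap φ.symm) := by
  rw [pushVF_apply, comp_symm_comp]

omit [ConnectedSpace M] in
lemma deriv_compactSupport (X : SmoothVF d M) (h : C^(⊤ : ℕ∞)⟮𝓡 d, M; ℝ⟯)
    (hh : HasCompactSupport ⇑h) : HasCompactSupport ⇑(X h) := by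
  haveI : LocallyCompactSpace M := ChartedSpace.locallyCompactSpace (EuclideanSpace ℝ (Fin d)) M
  haveI := Manifold.metrizableSpace (𝓡 d) M
  haveI := TopologicalSpace.metrizableSpaceMetric M
  obtain ⟨K', hK', hsub⟩ := exists_compact_superset hh
  obtain ⟨ψ, hψ1, hψ0, -⟩ := exists_contMDiffMap_one_nhds_of_subset_interior (𝓡 d) (n := (⊤ : ℕ∞))
    (isClosed_tsupport (⇑h)) hsub
  have hmul : h = ψ * h := by
    ext x
    by_cases hx : x ∈ tsupport (⇑h)
    · have := hψ1.self_of_nhdsSet x hx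
      show h x = ψ x * h x
      rw [this, one_mul]
    · show h x = ψ x * h x
      rw [image_eq_zero_of_notMem_tsupport hx, mul_zero]
  apply HasCompactSupport.intro hK'
  intro x hx
  have hx' : x ∉ tsupport (⇑h) := fun hc => hx (interior_subset (hsub hc))
  calc (X h) x = (X (ψ * h)) x := by rw [← hmul]
    _ = ψ x * (X h) x + h x * (X ψ) x := by rw [Derivation.leibniz]; rfl
    _ = 0 := by rw [hψ0 x hx, image_eq_zero_of_notMem_tsupport hx', zero_mul, zero_mul, add_zero]

omit [SigmaCompactSpace M] [ConnectedSpace M] [T2Space M] in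
lemma comp_add' (h₁ h₂ : C^(⊤ : ℕ∞)⟮𝓡 d, M; ℝ⟯) (ψ : C^(⊤ : ℕ∞)⟮𝓡 d, M; 𝓡 d, M⟯) :
    (h₁ + h₂).comp ψ = h₁.comp ψ + h₂.comp ψ := rfl

omit [SigmaCompactSpace M] [ConnectedSpace M] [T2Space M] in
lemma comp_neg' (h : C^(⊤ : ℕ∞)⟮𝓡 d, M; ℝ⟯) (ψ : C^(⊤ : ℕ∞)⟮𝓡 d, M; 𝓡 d, M⟯) :
    (-h).comp ψ = -(h.comp ψ) := rfl

omit [SigmaCompactSpace M] [ConnectedSpace M] [T2Space M] in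
lemma comp_sub' (h₁ h₂ : C^(⊤ : ℕ∞)⟮𝓡 d, M; ℝ⟯) (ψ : C^(⊤ : ℕ∞)⟮𝓡 d, M; 𝓡 d, M⟯) :
    (h₁ - h₂).comp ψ = h₁.comp ψ - h₂.comp ψ := rfl

end Aux


/-- **`Ad` is a left action of `𝒢_M` on `𝔤_M` by Lie algebra automorphisms** :
(i) `Ad_{(id,0)} = id` and `Ad_{(φ,f)(θ,g)} = Ad_{(φ,f)} ∘ Ad_{(θ,g)}` (the product in
`𝒢_M` being `(φ,f)(θ,g) = (φ∘θ, g∘φ⁻¹+f)`); moreover `Ad_{(φ,f)}` preserves `𝔤_M`;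
(ii) each `Ad_{(φ,f)}` is linear and preserves the bracket of `𝔤_M`. -/
theorem AdG_action_and_lie_automorphism
    (φ θ : M ≃ₘ⟮𝓡 d, 𝓡 d⟯ M)
    (hφ : ∃ K : Set M, IsCompact K ∧ ∀ x ∉ K, φ x = x)
    (hθ : ∃ K : Set M, IsCompact K ∧ ∀ x ∉ K, θ x = x)
    (f g : C^(⊤ : ℕ∞)⟮𝓡 d, M; ℝ⟯)
    (hf : HasCompactSupport ⇑f) (hg : HasCompactSupport ⇑g) :
    -- (i) `Ad_{(id_M, 0)}` is the identity ...
    (∀ p : GMAlg d M, VFCompactSupport p.1 → HasCompactSupport ⇑p.2 →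
      AdG (Diffeomorph.refl (𝓡 d) M (⊤ : ℕ∞)) (0 : C^(⊤ : ℕ∞)⟮𝓡 d, M; ℝ⟯) p = p) ∧
    -- ... and `Ad_{(φ∘θ, g∘φ⁻¹+f)} = Ad_{(φ,f)} ∘ Ad_{(θ,g)}`
    (∀ p : GMAlg d M, VFCompactSupport p.1 → HasCompactSupport ⇑p.2 →
      AdG (θ.trans φ) (g.comp (toSmoothMap φ.symm) + f) p = AdG φ f (AdG θ g p)) ∧
    -- `Ad_{(φ,f)}` maps `𝔤_M` to `𝔤_M`
    (∀ p : GMAlg d M, VFCompactSupport p.1 → HasCompactSupport ⇑p.2 →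
      VFCompactSupport (AdG φ f p).1 ∧ HasCompactSupport ⇑(AdG φ f p).2) ∧
    -- (ii) `Ad_{(φ,f)}` is linear ...
    (∀ (c : ℝ) (p q : GMAlg d M), AdG φ f (c • p + q) = c • AdG φ f p + AdG φ f q) ∧
    -- ... and preserves the bracket of `𝔤_M`
    (∀ p q : GMAlg d M, VFCompactSupport p.1 → HasCompactSupport ⇑p.2 →
      VFCompactSupport q.1 → HasCompactSupport ⇑q.2 →
      AdG φ f (gmBracket p q) = gmBracket (AdG φ f p) (AdG φ f q)) := by
  refine ⟨?_, ?_, ?_, ?_, ?_⟩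
  · -- identity
    intro p _ _
    apply Prod.ext
    · apply Derivation.ext; intro h; apply ContMDiffMap.ext; intro y
      rfl
    · show p.2.comp (toSmoothMap (Diffeomorph.refl (𝓡 d) M (⊤ : ℕ∞)).symm)
        + (p.1 ((0 : C^(⊤ : ℕ∞)⟮𝓡 d, M; ℝ⟯).comp (toSmoothMap (Diffeomorph.refl (𝓡 d) M (⊤ : ℕ∞))))).comp
          (toSmoothMap (Diffeomorph.refl (𝓡 d) M (⊤ : ℕ∞)).symm) = p.2
      have h0 : (0 : C^(⊤ : ℕ∞)⟮𝓡 d, M; ℝ⟯).comp (toSmoothMap (Diffeomorph.refl (𝓡 d) M (⊤ : ℕ∞))) = 0 := rfl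
      rw [h0, map_zero]
      apply ContMDiffMap.ext; intro y
      show p.2 y + (0 : C^(⊤ : ℕ∞)⟮𝓡 d, M; ℝ⟯).comp (toSmoothMap (Diffeomorph.refl (𝓡 d) M (⊤ : ℕ∞)).symm) y
        = p.2 y
      show p.2 y + 0 = p.2 y
      exact add_zero _
  · -- composition
    intro p _ _
    apply Prod.ext
    · rfl
    · show p.2.comp (toSmoothMap (θ.trans φ).symm)
        + (p.1 ((g.comp (toSmoothMap φ.symm) + f).comp (toSmoothMap (θ.trans φ)))).comp
          (toSmoothMap (θ.trans φ).symm) = _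
      have key : (g.comp (toSmoothMap φ.symm) + f).comp (toSmoothMap (θ.trans φ))
          = g.comp (toSmoothMap θ) + f.comp (toSmoothMap (θ.trans φ)) := by
        ext x
        show g (φ.symm (φ (θ x))) + f (φ (θ x)) = g (θ x) + f (φ (θ x))
        rw [φ.symm_apply_apply]
      rw [key, map_add]
      apply ContMDiffMap.ext; intro y
      exact (add_assoc _ _ _).symm
  · -- compact support
    intro p hX h2
    constructor
    · obtain ⟨K, hK, h0⟩ := hX
      refine ⟨⇑φ '' K, hK.image φ.continuous, fun y hy => ?_⟩
      have hy' : φ.symm y ∉ K := fun hc => hy ⟨φ.symm y, hc, φ.apply_symm_apply y⟩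
      apply Derivation.ext; intro a
      have hzero : ∀ h : C^(⊤ : ℕ∞)⟮𝓡 d, M; ℝ⟯, (p.1 h) (φ.symm y) = 0 := by
        intro h
        have := DFunLike.congr_fun (h0 (φ.symm y) hy') h
        change (p.1 h) (φ.symm y) = 0 at this
        exact this
      show (pushVF φ p.1 a) y = 0
      exact hzero _
    · have hsymm : ∀ h : C^(⊤ : ℕ∞)⟮𝓡 d, M; ℝ⟯, HasCompactSupport ⇑h →
          HasCompactSupport ⇑(h.comp (toSmoothMap φ.symm)) := by
        intro h hh
        exact hh.comp_homeomorph φ.symm.toHomeomorph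
      have hfφ : HasCompactSupport ⇑(f.comp (toSmoothMap φ)) :=
        hf.comp_homeomorph φ.toHomeomorph
      exact (hsymm p.2 h2).add (hsymm _ (deriv_compactSupport p.1 _ hfφ))
  · -- linearity
    intro c p q
    apply Prod.ext
    · apply Derivation.ext; intro h; apply ContMDiffMap.ext; intro y
      rfl
    · apply ContMDiffMap.ext; intro y
      show (c • p.2 + q.2) (φ.symm y)
          + ((c • p.1 + q.1) (f.comp (toSmoothMap φ))) (φ.symm y)
        = c • (p.2 (φ.symm y) + (p.1 (f.comp (toSmoothMap φ))) (φ.symm y))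
          + (q.2 (φ.symm y) + (q.1 (f.comp (toSmoothMap φ))) (φ.symm y))
      show c * p.2 (φ.symm y) + q.2 (φ.symm y)
          + (c * (p.1 (f.comp (toSmoothMap φ))) (φ.symm y)
            + (q.1 (f.comp (toSmoothMap φ))) (φ.symm y))
        = c * (p.2 (φ.symm y) + (p.1 (f.comp (toSmoothMap φ))) (φ.symm y))
          + (q.2 (φ.symm y) + (q.1 (f.comp (toSmoothMap φ))) (φ.symm y))
      ring
  · -- bracket
    intro p q _ _ _ _
    set X := p.1; set Y := q.1
    apply Prod.ext
    · apply Derivation.ext; intro h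
      show ((-⁅X, Y⁆ : SmoothVF d M) (h.comp (toSmoothMap φ))).comp (toSmoothMap φ.symm)
        = (gmBracket (AdG φ f p) (AdG φ f q)).1 h
      have e2 : (-⁅X, Y⁆ : SmoothVF d M) (h.comp (toSmoothMap φ))
          = -(X (Y (h.comp (toSmoothMap φ))) - Y (X (h.comp (toSmoothMap φ)))) := by
        rw [Derivation.neg_apply, Derivation.commutator_apply]
      rw [e2]
      have e3 : ((gmBracket (AdG φ f p) (AdG φ f q)).1 : SmoothVF d M) h
          = -(pushVF φ X (pushVF φ Y h) - pushVF φ Y (pushVF φ X h)) := by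
        show (-⁅pushVF φ X, pushVF φ Y⁆ : SmoothVF d M) h = _
        rw [Derivation.neg_apply, Derivation.commutator_apply]
      rw [e3, pushVF_apply φ Y h, pushVF_comp_symm, pushVF_apply φ X h, pushVF_comp_symm,
        comp_neg', comp_sub']
    · show (-(X q.2) + Y p.2).comp (toSmoothMap φ.symm)
        + ((-⁅X, Y⁆ : SmoothVF d M) (f.comp (toSmoothMap φ))).comp (toSmoothMap φ.symm) = _
      show _ = -(pushVF φ X (q.2.comp (toSmoothMap φ.symm)
            + (Y (f.comp (toSmoothMap φ))).comp (toSmoothMap φ.symm)))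
          + pushVF φ Y (p.2.comp (toSmoothMap φ.symm)
            + (X (f.comp (toSmoothMap φ))).comp (toSmoothMap φ.symm))
      rw [map_add, map_add, pushVF_comp_symm, pushVF_comp_symm, pushVF_comp_symm,
        pushVF_comp_symm]
      have e2 : (-⁅X, Y⁆ : SmoothVF d M) (f.comp (toSmoothMap φ))
          = -(X (Y (f.comp (toSmoothMap φ))) - Y (X (f.comp (toSmoothMap φ)))) := by
        rw [Derivation.neg_apply, Derivation.commutator_apply]
      rw [e2, comp_add', comp_neg', comp_neg', comp_sub']
      abel
end

section
/- Let K : M × M → ℂ be measurable with ∫∫ |K(x,y)|² dμ(x)dμ(y) < ∞, and let T_K be the associated integral operator, (T_Kψ)(x) := ∫_M K(x,y)ψ(y) dμ(y) for ψ ∈ L²(M,μ). Then for every (φ,f) ∈ 𝒢_M, h ∈ (0,1], and ψ ∈ L²(M,μ), the conjugated operator satisfies ρ^h_{(φ,f)} T_K (ρ^h_{(φ,f)})⁻¹ ψ = T_{K'} ψ in L²(M,μ), where K'(x,y) := e^{−2πi(f(x)−f(y))/h} · D(x)^{1/2} D(y)^{1/2} · K(φ⁻¹(x), φ⁻¹(y))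 and D := d(φ_*μ)/dμ. -/
/-!
STATEMENT 11: Let `K : M × M → ℂ` be measurable and square integrable for `μ ⊗ μ`, with
associated integral operator `(T_Kψ)(x) = ∫ K(x,y)ψ(y) dμ(y)`. Then for every
`(φ,f) ∈ 𝒢_M`, `h ∈ (0,1]` and `ψ ∈ L²(M,μ)`,
`ρ^h_{(φ,f)} T_K (ρ^h_{(φ,f)})⁻¹ ψ = T_{K'} ψ` in `L²(M,μ)`, where
`K'(x,y) = e^{−2πi(f(x)−f(y))/h} D(x)^{1/2} D(y)^{1/2} K(φ⁻¹(x),φ⁻¹(y))`,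
`D = d(φ_*μ)/dμ`, and `(ρ^h_{(φ,f)})⁻¹ = ρ^h_{(φ⁻¹, −f∘φ)}`.
-/

open Manifold MeasureTheory Topology
open scoped ContDiff

variable {d : ℕ} {M : Type*} [TopologicalSpace M]
  [ChartedSpace (EuclideanSpace ℝ (Fin d)) M]
  [IsManifold (𝓡 d) (⊤ : ℕ∞) M]
  [SigmaCompactSpace M] [ConnectedSpace M] [T2Space M]
  [MeasurableSpace M] [BorelSpace M]

/-- The operator `ρ^h_{(φ,f)}` on functions:
`(ρ^h_{(φ,f)}ψ)(x) = e^{−2πi f(x)/h} ((d(φ_*μ)/dμ)(x))^{1/2} ψ(φ⁻¹(x))`. -/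
noncomputable def rho (h : ℝ) (φ : M ≃ₘ⟮𝓡 d, 𝓡 d⟯ M) (f : M → ℝ) (μ : Measure M)
    (ψ : M → ℂ) : M → ℂ := fun x =>
  Complex.exp (((-2 * Real.pi * f x / h : ℝ) : ℂ) * Complex.I) *
    ((Real.sqrt (((μ.map ⇑φ).rnDeriv μ) x).toReal : ℝ) : ℂ) * ψ (φ.symm x)

/-- The integral operator `T_K` with kernel `K`: `(T_Kψ)(x) = ∫ K(x,y)ψ(y) dμ(y)`. -/
noncomputable def intOp (μ : Measure M) (K : M → M → ℂ) (ψ : M → ℂ) : M → ℂ :=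
  fun x => ∫ y, K x y * ψ y ∂μ

/-- **Conjugation of integral operators by `ρ^h_{(φ,f)}`** :
`ρ^h_{(φ,f)} T_K (ρ^h_{(φ,f)})⁻¹ = T_{K'}` on `L²(M,μ)`, where
`K'(x,y) = e^{−2πi(f(x)−f(y))/h} D(x)^{1/2} D(y)^{1/2} K(φ⁻¹(x),φ⁻¹(y))` and
`D = d(φ_*μ)/dμ`. -/
theorem rho_conj_intOp
    (μ : Measure M) [SigmaFinite μ]
    (hquasi : ∀ φ : M ≃ₘ⟮𝓡 d, 𝓡 d⟯ M,
      (∃ K : Set M, IsCompact K ∧ ∀ x ∉ K, φ x = x) →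
        μ.map ⇑φ ≪ μ ∧ μ ≪ μ.map ⇑φ)
    (h : ℝ) (hh : h ∈ Set.Ioc (0 : ℝ) 1)
    (φ : M ≃ₘ⟮𝓡 d, 𝓡 d⟯ M) (hφ : ∃ K : Set M, IsCompact K ∧ ∀ x ∉ K, φ x = x)
    (f : M → ℝ) (hf : ContMDiff (𝓡 d) 𝓘(ℝ, ℝ) (⊤ : ℕ∞) f) (hfc : HasCompactSupport f)
    (K : M → M → ℂ)
    (hKm : Measurable (Function.uncurry K))
    (hK2 : ∫⁻ p, (‖Function.uncurry K p‖₊ : ENNReal) ^ 2 ∂(μ.prod μ) < ⊤)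
    (ψ : M → ℂ) (hψ : MemLp ψ 2 μ) :
    rho h φ f μ (intOp μ K (rho h φ.symm (-(f ∘ ⇑φ)) μ ψ))
      =ᵐ[μ]
    intOp μ (fun x y =>
      Complex.exp (((-2 * Real.pi * (f x - f y) / h : ℝ) : ℂ) * Complex.I) *
        ((Real.sqrt (((μ.map ⇑φ).rnDeriv μ) x).toReal : ℝ) : ℂ) *
        ((Real.sqrt (((μ.map ⇑φ).rnDeriv μ) y).toReal : ℝ) : ℂ) *
        K (φ.symm x) (φ.symm y)) ψ := by
  obtain ⟨hac, hca⟩ := hquasi φ hφ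
  have hφm : Measurable ⇑φ := φ.continuous.measurable
  have hφsm : Measurable ⇑φ.symm := φ.symm.continuous.measurable
  have hfm : Measurable f := hf.continuous.measurable
  have hembs : MeasurableEmbedding ⇑φ.symm :=
    MeasurableEquiv.measurableEmbedding
      ⟨⟨⇑φ.symm, ⇑φ, fun y => φ.apply_symm_apply y, fun y => φ.symm_apply_apply y⟩, hφsm, hφm⟩
  have hembf : MeasurableEmbedding ⇑φ :=
    MeasurableEquiv.measurableEmbedding
      ⟨⟨⇑φ, ⇑φ.symm, fun y => φ.symm_apply_apply y, fun y => φ.apply_symm_apply y⟩, hφm, hφsm⟩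
  set ν : Measure M := μ.map ⇑φ with hν
  haveI hsf : SigmaFinite ν := hembf.sigmaFinite_map
  have hmap : ν.map ⇑φ.symm = μ := by
    rw [hν, Measure.map_map hφsm hφm]
    have hid : (⇑φ.symm ∘ ⇑φ) = id := funext fun y => φ.symm_apply_apply y
    rw [hid, Measure.map_id]
  set D : M → ENNReal := ν.rnDeriv μ with hD
  set E : M → ENNReal := (μ.map ⇑φ.symm).rnDeriv μ with hE
  have h2 : (fun y => E (φ.symm y)) =ᵐ[μ] fun y => (D y)⁻¹ := by
    have hmm := hembs.rnDeriv_map μ ν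
    rw [hmap] at hmm
    have hmm' := hca.ae_le hmm
    filter_upwards [hmm', (Measure.inv_rnDeriv' hca)] with y hy1 hy2
    rw [hE, hy1, ← hy2, Pi.inv_apply]
  have hpos : ∀ᵐ y ∂μ, 0 < D y := Measure.rnDeriv_pos' hca
  have hlt : ∀ᵐ y ∂μ, D y < ⊤ := Measure.rnDeriv_lt_top ν μ
  have hkey : ∀ᵐ y ∂μ,
      ((D y).toReal) * Real.sqrt (E (φ.symm y)).toReal = Real.sqrt (D y).toReal := by
    filter_upwards [h2, hpos, hlt] with y h2y hpy hly
    have hd : 0 < (D y).toReal := ENNReal.toReal_pos hpy.ne' hly.ne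
    have hs : Real.sqrt (D y).toReal ≠ 0 := ne_of_gt (Real.sqrt_pos.mpr hd)
    rw [h2y, ENNReal.toReal_inv, Real.sqrt_inv]
    field_simp
    rw [Real.sq_sqrt hd.le]
  have hDm : Measurable D := Measure.measurable_rnDeriv ν μ
  have hνe : ν = μ.withDensity (fun y => (((D y).toNNReal : NNReal) : ENNReal)) := by
    rw [← Measure.withDensity_rnDeriv_eq ν μ hac]
    exact withDensity_congr_ae
      (by filter_upwards [hlt] with y hy using (ENNReal.coe_toNNReal hy.ne).symm)
  have hexp : ∀ a b : ℝ,
      Complex.exp (((-2 * Real.pi * a / h : ℝ) : ℂ) * Complex.I) *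
        Complex.exp (((-2 * Real.pi * -b / h : ℝ) : ℂ) * Complex.I)
      = Complex.exp (((-2 * Real.pi * (a - b) / h : ℝ) : ℂ) * Complex.I) := by
    intro a b
    rw [← Complex.exp_add]
    congr 1
    push_cast
    ring
  refine Filter.Eventually.of_forall fun x => ?_
  simp only [rho, intOp, Pi.neg_apply, Function.comp_apply]
  have hGxm : AEStronglyMeasurable (fun z =>
      K (φ.symm x) (φ.symm z) *
        (Complex.exp (((-2 * Real.pi * -(f z) / h : ℝ) : ℂ) * Complex.I) *
          ((Real.sqrt (E (φ.symm z)).toReal : ℝ) : ℂ) * ψ z)) ν := by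
    have hA : Measurable (fun z => K (φ.symm x) (φ.symm z)) :=
      hKm.comp (measurable_const.prodMk hφsm)
    have hB : Measurable (fun z =>
        Complex.exp (((-2 * Real.pi * -(f z) / h : ℝ) : ℂ) * Complex.I)) := by
      apply Measurable.cexp
      exact (Complex.measurable_ofReal.comp
        ((hfm.neg.const_mul (-2 * Real.pi)).div_const h)).mul_const Complex.I
    have hC : Measurable (fun z => ((Real.sqrt (E (φ.symm z)).toReal : ℝ) : ℂ)) :=
      Complex.measurable_ofReal.comp
        (((Measure.measurable_rnDeriv _ μ).comp hφsm).ennreal_toReal.sqrt)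
    exact hA.aestronglyMeasurable.mul
      (((hB.mul hC).aestronglyMeasurable).mul (hψ.aestronglyMeasurable.mono_ac hac))
  have step1 :
      (∫ y, K (φ.symm x) y *
          (Complex.exp (((-2 * Real.pi * -(f (φ y)) / h : ℝ) : ℂ) * Complex.I) *
            ((Real.sqrt (E y).toReal : ℝ) : ℂ) * ψ (φ.symm.symm y)) ∂μ)
      = ∫ z, K (φ.symm x) (φ.symm z) *
          (Complex.exp (((-2 * Real.pi * -(f z) / h : ℝ) : ℂ) * Complex.I) *
            ((Real.sqrt (E (φ.symm z)).toReal : ℝ) : ℂ) * ψ z) ∂ν := by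
    rw [hν, integral_map hφm.aemeasurable hGxm]
    refine integral_congr_ae (Filter.Eventually.of_forall fun y => ?_)
    simp only [φ.symm_apply_apply]
    rfl
  have step2 :
      (∫ z, K (φ.symm x) (φ.symm z) *
          (Complex.exp (((-2 * Real.pi * -(f z) / h : ℝ) : ℂ) * Complex.I) *
            ((Real.sqrt (E (φ.symm z)).toReal : ℝ) : ℂ) * ψ z) ∂ν)
      = ∫ z, Complex.exp (((-2 * Real.pi * -(f z) / h : ℝ) : ℂ) * Complex.I) *
          ((Real.sqrt (D z).toReal : ℝ) : ℂ) * (K (φ.symm x) (φ.symm z) * ψ z) ∂μ := by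
    rw [hνe, integral_withDensity_eq_integral_smul hDm.ennreal_toNNReal]
    refine integral_congr_ae ?_
    filter_upwards [hkey] with z hz
    rw [NNReal.smul_def, Complex.real_smul,
      show (((D z).toNNReal : ℝ)) = (D z).toReal from rfl]
    have hz' : ((D z).toReal : ℂ) * ((Real.sqrt (E (φ.symm z)).toReal : ℝ) : ℂ)
        = ((Real.sqrt (D z).toReal : ℝ) : ℂ) := by exact_mod_cast hz
    linear_combination (K (φ.symm x) (φ.symm z) *
      Complex.exp (((-2 * Real.pi * -(f z) / h : ℝ) : ℂ) * Complex.I) * ψ z) * hz'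
  rw [step1, step2, ← integral_const_mul]
  refine integral_congr_ae (Filter.Eventually.of_forall fun z => ?_)
  have he := hexp (f x) (f z)
  linear_combination (((Real.sqrt (D x).toReal : ℝ) : ℂ) *
    ((Real.sqrt (D z).toReal : ℝ) : ℂ) * K (φ.symm x) (φ.symm z) * ψ z) * he
end
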